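/- arXiv:1208.3917 — 2 statements merged into one kernel-verified Lean document; each statement's English description precedes it below -/
import Mathlib

section
/- The group generated by f(x,y,z) = (x+1,y,z) and g(x,y,z) = (-x,y+1,-z) acting on ℝ³ acts freely: no nontrivial element of the group generated by f and g has a fixed point in ℝ³. -/
noncomputable def f : Equiv.Perm (ℝ × ℝ × ℝ) where
  toFun := fun p => (p.1 + 1, p.2.1, p.2.2)
  invFun := fun p => (p.1 - 1, p.2.1, p.2.2)
  left_inv := fun p => by simp
  right_inv := fun p => by simp

noncomputable def g : Equiv.Perm (ℝ × ℝ × ℝ) where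
  toFun := fun p => (-p.1, p.2.1 + 1, -p.2.2)
  invFun := fun p => (-p.1, p.2.1 - 1, -p.2.2)
  left_inv := fun p => by simp
  right_inv := fun p => by simp

lemma key : ∀ h ∈ Subgroup.closure ({f, g} : Set (Equiv.Perm (ℝ × ℝ × ℝ))),
    ∃ n : ℤ, ∃ a : ℝ, ∀ p : ℝ × ℝ × ℝ,
      h p = ((-1 : ℝ)^n * p.1 + a, p.2.1 + n, (-1 : ℝ)^n * p.2.2) := by
  intro h hh
  have hne : (-1 : ℝ) ≠ 0 := by norm_num
  induction hh using Subgroup.closure_induction with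
  | mem x hx =>
    rcases hx with hx | hx
    · refine ⟨0, 1, fun p => ?_⟩
      subst hx
      show (p.1 + 1, p.2.1, p.2.2) = _
      norm_num
    · refine ⟨1, 0, fun p => ?_⟩
      subst hx
      show (-p.1, p.2.1 + 1, -p.2.2) = _
      norm_num
  | one => exact ⟨0, 0, fun p => by simp⟩
  | mul x y _ _ hx hy =>
    obtain ⟨n₁, a₁, h₁⟩ := hx
    obtain ⟨n₂, a₂, h₂⟩ := hy
    refine ⟨n₁ + n₂, (-1 : ℝ)^n₁ * a₂ + a₁, fun p => ?_⟩
    have hxy : (x * y) p = x (y p) := rfl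
    rw [hxy, h₂, h₁, zpow_add₀ hne]
    simp only [Prod.mk.injEq]
    refine ⟨by ring, by push_cast; ring, by ring⟩
  | inv x _ hx =>
    obtain ⟨n, a, hn⟩ := hx
    refine ⟨-n, -((-1 : ℝ)^(-n) * a), fun p => ?_⟩
    have hs : x⁻¹ p = x.symm p := rfl
    rw [hs, Equiv.symm_apply_eq, hn]
    rw [zpow_neg]
    have he : ((-1 : ℝ)^n) ≠ 0 := zpow_ne_zero _ hne
    obtain ⟨p1, p2, p3⟩ := p
    simp only [Prod.mk.injEq]
    refine ⟨by field_simp; ring, by push_cast; ring, by field_simp⟩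

/-- The group generated by f and g acts freely on ℝ³: any element fixing a point is trivial. -/
theorem stmt1 : ∀ h ∈ Subgroup.closure ({f, g} : Set (Equiv.Perm (ℝ × ℝ × ℝ))),
    ∀ p : ℝ × ℝ × ℝ, h p = p → h = 1 := by
  intro h hh p hp
  obtain ⟨n, a, hn⟩ := key h hh
  rw [hn p] at hp
  have h2 : p.2.1 + (n : ℝ) = p.2.1 := congrArg (fun q => q.2.1) hp
  have hn0 : n = 0 := by
    have : (n : ℝ) = 0 := by linarith
    exact_mod_cast this
  subst hn0
  have h1 : p.1 + a = p.1 := by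
    have := congrArg (fun q => q.1) hp
    simpa using this
  have ha0 : a = 0 := by linarith
  subst ha0
  exact Equiv.ext fun q => by rw [hn q]; simp
end

section
/- The Klein bottle group K = ⟨a, b ∣ a²b² = 1⟩ is isomorphic to the group generated by f(x,y,z)=(x+1,y,z) and g(x,y,z)=(-x,y+1,-z), via the homomorphism sending a ↦ f g f⁻¹ and b ↦ f g⁻¹. -/
lemma f_apply (p : ℝ × ℝ × ℝ) : f p = (p.1 + 1, p.2.1, p.2.2) := rfl
lemma f_inv_apply (p : ℝ × ℝ × ℝ) : f⁻¹ p = (p.1 - 1, p.2.1, p.2.2) := rfl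
lemma g_apply (p : ℝ × ℝ × ℝ) : g p = (-p.1, p.2.1 + 1, -p.2.2) := rfl
lemma g_inv_apply (p : ℝ × ℝ × ℝ) : g⁻¹ p = (-p.1, p.2.1 - 1, -p.2.2) := rfl

lemma fzpow (m : ℤ) (p : ℝ × ℝ × ℝ) : (f ^ m) p = (p.1 + m, p.2.1, p.2.2) := by
  induction m using Int.induction_on with
  | zero => simp
  | succ k ih =>
      rw [show ((k : ℤ) + 1) = 1 + k by ring, zpow_add, zpow_one, Equiv.Perm.mul_apply, ih, f_apply]
      push_cast; ring_nf
  | pred k ih =>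
      rw [show (-(k : ℤ) - 1) = -1 + -k by ring, zpow_add, zpow_neg_one, Equiv.Perm.mul_apply, ih, f_inv_apply]
      push_cast; ring_nf

lemma gzpow (n : ℤ) (p : ℝ × ℝ × ℝ) :
    (g ^ n) p = ((-1) ^ n * p.1, p.2.1 + n, (-1) ^ n * p.2.2) := by
  induction n using Int.induction_on with
  | zero => simp
  | succ k ih =>
      rw [show ((k : ℤ) + 1) = 1 + k by ring, zpow_add, zpow_one, Equiv.Perm.mul_apply, ih, g_apply]
      rw [zpow_add₀ (by norm_num : (-1 : ℝ) ≠ 0), zpow_one]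
      push_cast; simp only [Prod.mk.injEq]; refine ⟨by ring, by ring, by ring⟩
  | pred k ih =>
      rw [show (-(k : ℤ) - 1) = -1 + -k by ring, zpow_add, zpow_neg_one, Equiv.Perm.mul_apply, ih, g_inv_apply]
      rw [zpow_add₀ (by norm_num : (-1 : ℝ) ≠ 0)]
      push_cast; simp only [Prod.mk.injEq]; norm_num; ring

lemma gfg : g * f * g⁻¹ = f⁻¹ :=
  Equiv.ext fun p => by
    simp [Equiv.Perm.mul_apply, f_apply, g_apply, f_inv_apply, g_inv_apply]
    ring

def kleinRels : Set (FreeGroup (Fin 2)) :=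
  {FreeGroup.of 0 * FreeGroup.of 0 * FreeGroup.of 1 * FreeGroup.of 1}

/-- The Klein bottle group ⟨a, b ∣ a²b² = 1⟩. -/
abbrev KleinGroup := PresentedGroup kleinRels

noncomputable def F : Fin 2 → Equiv.Perm (ℝ × ℝ × ℝ) := ![f * g * f⁻¹, f * g⁻¹]

lemma relF : (f * g * f⁻¹) * (f * g * f⁻¹) * (f * g⁻¹) * (f * g⁻¹) = 1 := by
  have h : f * (g * f * g⁻¹) =
      (f * g * f⁻¹) * (f * g * f⁻¹) * (f * g⁻¹) * (f * g⁻¹) := by group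
  rw [← h, gfg]
  group

lemma hrelF : ∀ r ∈ kleinRels, FreeGroup.lift F r = 1 := by
  intro r hr
  rw [kleinRels, Set.mem_singleton_iff] at hr
  subst hr
  simp only [map_mul, FreeGroup.lift_apply_of, F]
  simpa using relF

noncomputable def φ : KleinGroup →* Equiv.Perm (ℝ × ℝ × ℝ) := PresentedGroup.toGroup hrelF

noncomputable abbrev A : KleinGroup := PresentedGroup.of 0
noncomputable abbrev B : KleinGroup := PresentedGroup.of 1
noncomputable abbrev T : KleinGroup := A * B

lemma relK : A * A * B * B = 1 := by
  have h1 : (A * A * B * B : KleinGroup) = PresentedGroup.mk kleinRels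
      (FreeGroup.of 0 * FreeGroup.of 0 * FreeGroup.of 1 * FreeGroup.of 1) := by
    simp only [A, B, PresentedGroup.of, map_mul]
  rw [h1]
  have h2 : (FreeGroup.of 0 * FreeGroup.of 0 * FreeGroup.of 1 * FreeGroup.of 1 : FreeGroup (Fin 2))
      ∈ Subgroup.normalClosure kleinRels := Subgroup.subset_normalClosure rfl
  exact (QuotientGroup.eq_one_iff _).mpr h2

lemma AAB : A * A * B = B⁻¹ := eq_inv_of_mul_eq_one_left relK

lemma conjT : A * T * A⁻¹ = T⁻¹ := by
  have : A * T * A⁻¹ = (A * A * B) * A⁻¹ := by rw [T]; group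
  rw [this, AAB]
  group

lemma conjT' : A⁻¹ * T * A = T⁻¹ := by
  have h2 : A⁻¹ * T⁻¹ * A = T := by rw [← conjT]; group
  calc A⁻¹ * T * A = (A⁻¹ * T⁻¹ * A)⁻¹ := by group
    _ = T⁻¹ := by rw [h2]

lemma conjOne : ∀ n : ℤ, ∃ ε : ℤ, A ^ n * T * A ^ (-n) = T ^ ε := by
  intro n
  induction n using Int.induction_on with
  | zero => exact ⟨1, by group⟩
  | succ k ih =>
      obtain ⟨ε, hε⟩ := ih
      refine ⟨-ε, ?_⟩
      have h1 : A ^ ((k : ℤ) + 1) * T * A ^ (-((k : ℤ) + 1)) =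
          A * (A ^ (k : ℤ) * T * A ^ (-(k : ℤ))) * A⁻¹ := by group
      rw [h1, hε, ← conj_zpow, conjT, inv_zpow, ← zpow_neg]
  | pred k ih =>
      obtain ⟨ε, hε⟩ := ih
      refine ⟨-ε, ?_⟩
      have h1 : A ^ (-(k : ℤ) - 1) * T * A ^ (-(-(k : ℤ) - 1)) =
          A⁻¹ * (A ^ (-(k : ℤ)) * T * A ^ (-(-(k : ℤ)))) * A := by group
      have h2 : A⁻¹ * T ^ ε * A = (A⁻¹ * T * (A⁻¹)⁻¹) ^ ε := by rw [conj_zpow, inv_inv]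
      rw [h1, hε, h2, show A⁻¹ * T * (A⁻¹)⁻¹ = A⁻¹ * T * A by rw [inv_inv], conjT',
        inv_zpow, ← zpow_neg]

lemma conjAny (n m : ℤ) : ∃ k : ℤ, A ^ n * T ^ m * A ^ (-n) = T ^ k := by
  obtain ⟨ε, hε⟩ := conjOne n
  refine ⟨ε * m, ?_⟩
  have h1 : A ^ n * T ^ m * A ^ (-n) = (A ^ n * T * (A ^ n)⁻¹) ^ m := by
    rw [conj_zpow]; group
  rw [h1, show (A ^ n)⁻¹ = A ^ (-n) by group, hε, ← zpow_mul, mul_comm ε m]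

lemma normal_form (x : KleinGroup) : ∃ m n : ℤ, x = T ^ m * A ^ n := by
  have hx : x ∈ Subgroup.closure (Set.range (PresentedGroup.of : Fin 2 → KleinGroup)) := by
    rw [PresentedGroup.closure_range_of]; trivial
  induction hx using Subgroup.closure_induction with
  | mem y hy =>
      obtain ⟨i, rfl⟩ := hy
      fin_cases i
      · refine ⟨0, 1, ?_⟩
        show A = T ^ (0 : ℤ) * A ^ (1 : ℤ)
        group
      · refine ⟨-1, -1, ?_⟩
        show B = T ^ (-1 : ℤ) * A ^ (-1 : ℤ)
        have hB : (T⁻¹ * A⁻¹ : KleinGroup) = B := by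
          have h3 : (T⁻¹ * A⁻¹ : KleinGroup) = (A * A * B)⁻¹ := by rw [T]; group
          rw [h3, AAB]; group
        rw [← hB]; group
  | one => exact ⟨0, 0, by group⟩
  | mul y z hy hz ihy ihz =>
      obtain ⟨m, n, rfl⟩ := ihy
      obtain ⟨m', n', rfl⟩ := ihz
      obtain ⟨k, hk⟩ := conjAny n m'
      refine ⟨m + k, n + n', ?_⟩
      rw [zpow_add T, ← hk, zpow_add A]
      group
  | inv y hy ihy =>
      obtain ⟨m, n, rfl⟩ := ihy
      obtain ⟨k, hk⟩ := conjAny (-n) (-m)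
      refine ⟨k, -n, ?_⟩
      rw [← hk]
      group

lemma φ_A : φ A = f * g * f⁻¹ := by
  show PresentedGroup.toGroup hrelF (PresentedGroup.of 0) = _
  rw [PresentedGroup.toGroup.of]
  simp [F]

lemma φ_B : φ B = f * g⁻¹ := by
  show PresentedGroup.toGroup hrelF (PresentedGroup.of 1) = _
  rw [PresentedGroup.toGroup.of]
  simp [F]

lemma φ_T : φ T = f := by
  rw [T, map_mul, φ_A, φ_B]
  group

lemma φ_inj : Function.Injective φ := by
  rw [injective_iff_map_eq_one]
  intro x hx
  obtain ⟨m, n, rfl⟩ := normal_form x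
  rw [map_mul, map_zpow, map_zpow, φ_T, φ_A] at hx
  have h0 := congrArg (fun σ : Equiv.Perm (ℝ × ℝ × ℝ) => σ (0, 0, 0)) hx
  simp only [Equiv.Perm.mul_apply, conj_zpow, Equiv.Perm.one_apply] at h0
  rw [f_inv_apply, gzpow, f_apply, fzpow] at h0
  simp only [Prod.mk.injEq] at h0
  obtain ⟨h1, h2, -⟩ := h0
  have hn : n = 0 := by
    have : (n : ℝ) = 0 := by linarith
    exact_mod_cast this
  subst hn
  have hm : m = 0 := by
    norm_num at h1
    exact_mod_cast h1
  subst hm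
  group

lemma mem_cl (x : KleinGroup) : φ x ∈ Subgroup.closure ({f, g} : Set (Equiv.Perm (ℝ × ℝ × ℝ))) := by
  obtain ⟨m, n, rfl⟩ := normal_form x
  rw [map_mul, map_zpow, map_zpow, φ_T, φ_A]
  have hf : f ∈ Subgroup.closure ({f, g} : Set (Equiv.Perm (ℝ × ℝ × ℝ))) :=
    Subgroup.subset_closure (by simp)
  have hg : g ∈ Subgroup.closure ({f, g} : Set (Equiv.Perm (ℝ × ℝ × ℝ))) :=
    Subgroup.subset_closure (by simp)
  exact mul_mem (zpow_mem hf m) (zpow_mem (mul_mem (mul_mem hf hg) (inv_mem hf)) n)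

noncomputable def φ' : KleinGroup →* (Subgroup.closure ({f, g} : Set (Equiv.Perm (ℝ × ℝ × ℝ)))) :=
  φ.codRestrict _ mem_cl

lemma φ'_inj : Function.Injective φ' := by
  intro x y hxy
  apply φ_inj
  exact congrArg Subtype.val hxy

lemma φ'_surj : Function.Surjective φ' := by
  rintro ⟨y, hy⟩
  have hrange : Subgroup.closure ({f, g} : Set (Equiv.Perm (ℝ × ℝ × ℝ))) ≤ φ.range := by
    rw [Subgroup.closure_le]
    rintro x (rfl | rfl)
    · exact ⟨T, φ_T⟩
    · refine ⟨T⁻¹ * A * T, ?_⟩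
      rw [map_mul, map_mul, map_inv, φ_T, φ_A]
      group
  obtain ⟨x, hx⟩ := hrange hy
  exact ⟨x, Subtype.ext hx⟩

/-- The Klein bottle group is isomorphic to ⟨f, g⟩ via a ↦ fgf⁻¹, b ↦ fg⁻¹. -/
theorem stmt3 : ∃ e : KleinGroup ≃*
    (Subgroup.closure ({f, g} : Set (Equiv.Perm (ℝ × ℝ × ℝ)))),
    ((e (PresentedGroup.of 0) : Equiv.Perm (ℝ × ℝ × ℝ)) = f * g * f⁻¹) ∧
    ((e (PresentedGroup.of 1) : Equiv.Perm (ℝ × ℝ × ℝ)) = f * g⁻¹) := by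
  refine ⟨MulEquiv.ofBijective φ' ⟨φ'_inj, φ'_surj⟩, ?_, ?_⟩
  · show (φ' A : Equiv.Perm (ℝ × ℝ × ℝ)) = f * g * f⁻¹
    exact φ_A
  · show (φ' B : Equiv.Perm (ℝ × ℝ × ℝ)) = f * g⁻¹
    exact φ_B
end
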